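/- (b-colored Euler ODD=DISTINCT theorem) For every nonnegative integer n, the number of b-colored partitions of n in which every part has odd first coordinate equals the number of b-colored partitions of n in which every colored part occurs at most once; that is, h°(n) = h^d(n). -/

import Mathlib

open PowerSeries

namespace Theorems100

noncomputable section

variable {α : Type*}

open Finset

open scoped Classical

/-- The partial product for the generating function for odd partitions.
TODO: As `m` tends to infinity, this converges (in the `X`-adic topology).

If `m` is sufficiently large, the `i`th coefficient gives the number of odd partitions of the
natural number `i`: proved in `oddGF_prop`.
It is stated for an arbitrary field `α`, though it usually suffices to use `ℚ` or `ℝ`.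
-/
def partialOddGF (m : ℕ) [Field α] :=
  ∏ i ∈ range m, (1 - (X : PowerSeries α) ^ (2 * i + 1))⁻¹

/-- The partial product for the generating function for distinct partitions.
TODO: As `m` tends to infinity, this converges (in the `X`-adic topology).

If `m` is sufficiently large, the `i`th coefficient gives the number of distinct partitions of the
natural number `i`: proved in `distinctGF_prop`.
It is stated for an arbitrary commutative semiring `α`, though it usually suffices to use `ℕ`, `ℚ`
or `ℝ`.
-/
def partialDistinctGF (m : ℕ) [CommSemiring α] :=
  ∏ i ∈ range m, (1 + (X : PowerSeries α) ^ (i + 1))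

open Finset.HasAntidiagonal

universe u
variable {ι : Type u}

/-- A convenience constructor for the power series whose coefficients indicate a subset. -/
def indicatorSeries (α : Type*) [Semiring α] (s : Set ℕ) : PowerSeries α :=
  PowerSeries.mk fun n => if n ∈ s then 1 else 0

theorem coeff_indicator (s : Set ℕ) [Semiring α] (n : ℕ) :
    coeff n (indicatorSeries α s) = if n ∈ s then 1 else 0 :=
  coeff_mk _ _

theorem coeff_indicator_pos (s : Set ℕ) [Semiring α] (n : ℕ) (h : n ∈ s) :
    coeff n (indicatorSeries α s) = 1 := by rw [coeff_indicator, if_pos h]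

theorem coeff_indicator_neg (s : Set ℕ) [Semiring α] (n : ℕ) (h : n ∉ s) :
    coeff n (indicatorSeries α s) = 0 := by rw [coeff_indicator, if_neg h]

theorem constantCoeff_indicator (s : Set ℕ) [Semiring α] :
    constantCoeff (indicatorSeries α s) = if 0 ∈ s then 1 else 0 :=
  rfl

theorem two_series (i : ℕ) [Semiring α] :
    1 + (X : PowerSeries α) ^ i.succ = indicatorSeries α {0, i.succ} := by
  ext n
  simp only [coeff_indicator, coeff_one, coeff_X_pow, Set.mem_insert_iff, Set.mem_singleton_iff,
    map_add]
  cases' n with d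
  · simp [(Nat.succ_ne_zero i).symm]
  · simp [Nat.succ_ne_zero d]

theorem num_series' [Field α] (i : ℕ) :
    (1 - (X : PowerSeries α) ^ (i + 1))⁻¹ = indicatorSeries α {k | i + 1 ∣ k} := by
  rw [PowerSeries.inv_eq_iff_mul_eq_one]
  · ext n
    cases n with
    | zero => simp [mul_sub, zero_pow, constantCoeff_indicator]
    | succ n =>
      simp only [coeff_one, if_false, mul_sub, mul_one, coeff_indicator,
        LinearMap.map_sub, reduceCtorEq]
      simp_rw [coeff_mul, coeff_X_pow, coeff_indicator, @boole_mul _ _ _ _]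
      erw [@sum_ite _ _ _ _ _ (fun _ => Classical.propDecidable _), sum_ite]
      simp_rw [@filter_filter _ _ _ _ _, sum_const_zero, add_zero, sum_const, nsmul_eq_mul, mul_one,
        sub_eq_iff_eq_add, zero_add]
      symm
      split_ifs with h
      · suffices #{a ∈ antidiagonal (n + 1) | i + 1 ∣ a.fst ∧ a.snd = i + 1} = 1 by
          simp only [Set.mem_setOf_eq]; convert congr_arg ((↑) : ℕ → α) this; norm_cast
        rw [card_eq_one]
        cases' h with p hp
        refine ⟨((i + 1) * (p - 1), i + 1), ?_⟩
        ext ⟨a₁, a₂⟩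
        simp only [mem_filter, Prod.mk.injEq, HasAntidiagonal.mem_antidiagonal, mem_singleton]
        constructor
        · rintro ⟨a_left, ⟨a, rfl⟩, rfl⟩
          refine ⟨?_, rfl⟩
          rw [Nat.mul_sub_left_distrib, ← hp, ← a_left, mul_one, Nat.add_sub_cancel]
        · rintro ⟨rfl, rfl⟩
          match p with
          | 0 => rw [mul_zero] at hp; cases hp
          | p + 1 => rw [hp]; simp [mul_add]
      · suffices #{a ∈ antidiagonal (n + 1) | i + 1 ∣ a.fst ∧ a.snd = i + 1} = 0 by
          simp only [Set.mem_setOf_eq]; convert congr_arg ((↑) : ℕ → α) this; norm_cast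
        rw [card_eq_zero]
        apply eq_empty_of_forall_notMem
        simp only [Prod.forall, mem_filter, not_and, HasAntidiagonal.mem_antidiagonal]
        rintro _ h₁ h₂ ⟨a, rfl⟩ rfl
        apply h
        simp [← h₂]
  · simp [zero_pow]

def mkOdd : ℕ ↪ ℕ :=
  ⟨fun i => 2 * i + 1, fun x y h => by linarith⟩

-- The main workhorse of the partition theorem proof.
theorem partialGF_prop (α : Type*) [CommSemiring α] (n : ℕ) (s : Finset ℕ) (hs : ∀ i ∈ s, 0 < i)
    (c : ℕ → Set ℕ) (hc : ∀ i, i ∉ s → 0 ∈ c i) :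
    #{p : n.Partition | (∀ j, p.parts.count j ∈ c j) ∧ ∀ j ∈ p.parts, j ∈ s} =
      coeff (R := α) n (∏ i ∈ s, indicatorSeries α ((· * i) '' c i)) := by
  simp_rw [coeff_prod, coeff_indicator, prod_boole, sum_boole]
  apply congr_arg
  simp only [mem_univ, forall_true_left, not_and, not_forall, exists_prop,
    Set.mem_image, not_exists]
  set φ : (a : Nat.Partition n) →
    a ∈ filter (fun p ↦ (∀ (j : ℕ), Multiset.count j p.parts ∈ c j) ∧ ∀ j ∈ p.parts, j ∈ s) univ →
    ℕ →₀ ℕ := fun p _ => {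
      toFun := fun i => Multiset.count i p.parts • i
      support := Finset.filter (fun i => i ≠ 0) p.parts.toFinset
      mem_support_toFun := fun a => by
        simp only [smul_eq_mul, ne_eq, mul_eq_zero, Multiset.count_eq_zero]
        rw [not_or, not_not]
        simp only [Multiset.mem_toFinset, not_not, mem_filter] }
  refine Finset.card_bij φ ?_ ?_ ?_
  · intro a ha
    simp only [φ, not_forall, not_exists, not_and, exists_prop, mem_filter]
    rw [mem_finsuppAntidiag]
    dsimp only [ne_eq, smul_eq_mul, id_eq, eq_mpr_eq_cast, le_eq_subset, Finsupp.coe_mk]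
    simp only [mem_univ, forall_true_left, not_and, not_forall, exists_prop,
      mem_filter, true_and] at ha
    refine ⟨⟨?_, fun i ↦ ?_⟩, fun i _ ↦ ⟨a.parts.count i, ha.1 i, rfl⟩⟩
    · conv_rhs => simp [← a.parts_sum]
      rw [sum_multiset_count_of_subset _ s]
      · simp only [smul_eq_mul]
      · intro i
        simp only [Multiset.mem_toFinset, not_not, mem_filter]
        apply ha.2
    · simp only [ne_eq, Multiset.mem_toFinset, not_not, mem_filter, and_imp]
      exact fun hi _ ↦ ha.2 i hi
  · intro p₁ hp₁ p₂ hp₂ h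
    apply Nat.Partition.ext
    simp only [true_and, mem_univ, mem_filter] at hp₁ hp₂
    ext i
    simp only [φ, ne_eq, Multiset.mem_toFinset, not_not, smul_eq_mul, Finsupp.mk.injEq] at h
    by_cases hi : i = 0
    · rw [hi]
      rw [Multiset.count_eq_zero_of_notMem]
      · rw [Multiset.count_eq_zero_of_notMem]
        intro a; exact Nat.lt_irrefl 0 (hs 0 (hp₂.2 0 a))
      intro a; exact Nat.lt_irrefl 0 (hs 0 (hp₁.2 0 a))
    · rw [← mul_left_inj' hi]
      rw [funext_iff] at h
      exact h.2 i
  · simp only [φ, mem_filter, mem_finsuppAntidiag, mem_univ, exists_prop, true_and, and_assoc]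
    rintro f ⟨hf, hf₃, hf₄⟩
    have hf' : f ∈ finsuppAntidiag s n := mem_finsuppAntidiag.mpr ⟨hf, hf₃⟩
    simp only [mem_finsuppAntidiag] at hf'
    refine ⟨⟨∑ i ∈ s, Multiset.replicate (f i / i) i, ?_, ?_⟩, ?_, ?_, ?_⟩
    · intro i hi
      simp only [exists_prop, Multiset.mem_sum, mem_map, Function.Embedding.coeFn_mk] at hi
      rcases hi with ⟨t, ht, z⟩
      apply hs
      rwa [Multiset.eq_of_mem_replicate z]
    · simp_rw [Multiset.sum_sum, Multiset.sum_replicate, Nat.nsmul_eq_mul]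
      rw [← hf'.1]
      refine sum_congr rfl fun i hi => Nat.div_mul_cancel ?_
      rcases hf₄ i hi with ⟨w, _, hw₂⟩
      rw [← hw₂]
      exact dvd_mul_left _ _
    · intro i
      simp_rw [Multiset.count_sum', Multiset.count_replicate, sum_ite_eq']
      split_ifs with h
      · rcases hf₄ i h with ⟨w, hw₁, hw₂⟩
        rwa [← hw₂, Nat.mul_div_cancel _ (hs i h)]
      · exact hc _ h
    · intro i hi
      rw [Multiset.mem_sum] at hi
      rcases hi with ⟨j, hj₁, hj₂⟩
      rwa [Multiset.eq_of_mem_replicate hj₂]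
    · ext i
      simp_rw [Multiset.count_sum', Multiset.count_replicate, sum_ite_eq']
      simp only [ne_eq, Multiset.mem_toFinset, not_not, smul_eq_mul, ite_mul,
        zero_mul, Finsupp.coe_mk]
      split_ifs with h
      · apply Nat.div_mul_cancel
        rcases hf₄ i h with ⟨w, _, hw₂⟩
        apply Dvd.intro_left _ hw₂
      · apply symm
        rw [← Finsupp.notMem_support_iff]
        exact notMem_mono hf'.2 h

theorem partialOddGF_prop [Field α] (n m : ℕ) :
    #{p : n.Partition | ∀ j ∈ p.parts, j ∈ (range m).map mkOdd} = coeff (R := α) n (partialOddGF m) := by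
  rw [partialOddGF]
  convert partialGF_prop α n
    ((range m).map mkOdd) _ (fun _ => Set.univ) (fun _ _ => trivial) using 2
  · congr
    simp only [true_and, forall_const, Set.mem_univ]
  · rw [Finset.prod_map]
    simp_rw [num_series']
    congr! 2 with x
    ext k
    constructor
    · rintro ⟨p, rfl⟩
      refine ⟨p, ⟨⟩, ?_⟩
      apply mul_comm
    rintro ⟨a_w, -, rfl⟩
    apply Dvd.intro_left a_w rfl
  · intro i
    rw [mem_map]
    rintro ⟨a, -, rfl⟩
    exact Nat.succ_pos _

/-- If m is big enough, the partial product's coefficient counts the number of odd partitions -/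
theorem oddGF_prop [Field α] (n m : ℕ) (h : n < m * 2) :
    #(Nat.Partition.odds n) = coeff (R := α) n (partialOddGF m) := by
  rw [← partialOddGF_prop, Nat.Partition.odds, Nat.Partition.restricted]
  congr with p
  apply forall₂_congr
  intro i hi
  have hin : i ≤ n := by
    simpa [p.parts_sum] using Multiset.single_le_sum (fun _ _ => Nat.zero_le _) _ hi
  simp only [mkOdd, exists_prop, mem_range, Function.Embedding.coeFn_mk, mem_map]
  constructor
  · intro hi₂
    have := Nat.mod_add_div i 2
    rw [Nat.not_even_iff] at hi₂
    rw [hi₂, add_comm] at this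
    refine ⟨i / 2, ?_, this⟩
    rw [Nat.div_lt_iff_lt_mul zero_lt_two]
    exact lt_of_le_of_lt hin h
  · rintro ⟨a, -, rfl⟩
    rw [even_iff_two_dvd]
    apply Nat.two_not_dvd_two_mul_add_one

theorem partialDistinctGF_prop [CommSemiring α] (n m : ℕ) :
    #{p : n.Partition |
        p.parts.Nodup ∧ ∀ j ∈ p.parts, j ∈ (range m).map ⟨Nat.succ, Nat.succ_injective⟩} =
      coeff (R := α) n (partialDistinctGF m) := by
  rw [partialDistinctGF]
  convert partialGF_prop α n
    ((range m).map ⟨Nat.succ, Nat.succ_injective⟩) _ (fun _ => {0, 1}) (fun _ _ => Or.inl rfl)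
    using 2
  · congr! with p
    rw [Multiset.nodup_iff_count_le_one]
    congr! 1 with i
    rcases Multiset.count i p.parts with (_ | _ | ms) <;> simp
  · simp_rw [Finset.prod_map, two_series]
    congr with i
    simp [Set.image_pair]
  · simp only [mem_map, Function.Embedding.coeFn_mk]
    rintro i ⟨_, _, rfl⟩
    apply Nat.succ_pos

/-- If m is big enough, the partial product's coefficient counts the number of distinct partitions
-/
theorem distinctGF_prop [CommSemiring α] (n m : ℕ) (h : n < m + 1) :
    #(Nat.Partition.distincts n) = coeff (R := α) n (partialDistinctGF m) := by
  rw [← partialDistinctGF_prop, Nat.Partition.distincts]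
  congr with p
  apply (and_iff_left _).symm
  intro i hi
  have : i ≤ n := by
    simpa [p.parts_sum] using Multiset.single_le_sum (fun _ _ => Nat.zero_le _) _ hi
  simp only [mkOdd, exists_prop, mem_range, Function.Embedding.coeFn_mk, mem_map]
  refine ⟨i - 1, ?_, Nat.succ_pred_eq_of_pos (p.parts_pos hi)⟩
  rw [tsub_lt_iff_right (Nat.one_le_iff_ne_zero.mpr (p.parts_pos hi).ne')]
  exact lt_of_le_of_lt this h

/-- The key proof idea for the partition theorem, showing that the generating functions for both
sequences are ultimately the same (since the factor converges to 0 as m tends to infinity).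
It's enough to not take the limit though, and just consider large enough `m`.
-/
theorem same_gf [Field α] (m : ℕ) :
    (partialOddGF m * (range m).prod fun i => 1 - (X : PowerSeries α) ^ (m + i + 1)) =
      partialDistinctGF m := by
  rw [partialOddGF, partialDistinctGF]
  induction' m with m ih
  · simp
  set! π₀ : PowerSeries α := ∏ i ∈ range m, (1 - X ^ (m + 1 + i + 1)) with hπ₀
  set! π₁ : PowerSeries α := ∏ i ∈ range m, (1 - X ^ (2 * i + 1))⁻¹ with hπ₁
  set! π₂ : PowerSeries α := ∏ i ∈ range m, (1 - X ^ (m + i + 1)) with hπ₂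
  set! π₃ : PowerSeries α := ∏ i ∈ range m, (1 + X ^ (i + 1)) with hπ₃
  rw [← hπ₃] at ih
  have h : constantCoeff (R := α) (1 - X ^ (2 * m + 1)) ≠ 0 := by
    rw [RingHom.map_sub, RingHom.map_pow, constantCoeff_one, constantCoeff_X,
      zero_pow (2 * m).succ_ne_zero, sub_zero]
    exact one_ne_zero
  calc
    (∏ i ∈ range (m + 1), (1 - X ^ (2 * i + 1))⁻¹) *
          ∏ i ∈ range (m + 1), (1 - X ^ (m + 1 + i + 1)) =
        π₁ * (1 - X ^ (2 * m + 1))⁻¹ * (π₀ * (1 - X ^ (m + 1 + m + 1))) := by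
      rw [prod_range_succ _ m, ← hπ₁, prod_range_succ _ m, ← hπ₀]
    _ = π₁ * (1 - X ^ (2 * m + 1))⁻¹ * (π₀ * ((1 + X ^ (m + 1)) * (1 - X ^ (m + 1)))) := by
      rw [← sq_sub_sq, one_pow, add_assoc _ m 1, ← two_mul (m + 1), pow_mul']
    _ = π₀ * (1 - X ^ (m + 1)) * (1 - X ^ (2 * m + 1))⁻¹ * (π₁ * (1 + X ^ (m + 1))) := by ring
    _ =
        (∏ i ∈ range (m + 1), (1 - X ^ (m + 1 + i))) * (1 - X ^ (2 * m + 1))⁻¹ *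
          (π₁ * (1 + X ^ (m + 1))) := by
      rw [prod_range_succ', add_zero, hπ₀]; simp_rw [← add_assoc]
    _ = π₂ * (1 - X ^ (m + 1 + m)) * (1 - X ^ (2 * m + 1))⁻¹ * (π₁ * (1 + X ^ (m + 1))) := by
      rw [add_right_comm, hπ₂, ← prod_range_succ]; simp_rw [add_right_comm]
    _ = π₂ * (1 - X ^ (2 * m + 1)) * (1 - X ^ (2 * m + 1))⁻¹ * (π₁ * (1 + X ^ (m + 1))) := by
      rw [two_mul, add_right_comm _ m 1]
    _ = (1 - X ^ (2 * m + 1)) * (1 - X ^ (2 * m + 1))⁻¹ * π₂ * (π₁ * (1 + X ^ (m + 1))) := by ring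
    _ = π₂ * (π₁ * (1 + X ^ (m + 1))) := by rw [PowerSeries.mul_inv_cancel _ h, one_mul]
    _ = π₁ * π₂ * (1 + X ^ (m + 1)) := by ring
    _ = π₃ * (1 + X ^ (m + 1)) := by rw [ih]
    _ = _ := by rw [prod_range_succ]

theorem same_coeffs [Field α] (m n : ℕ) (h : n ≤ m) :
    coeff (R := α) n (partialOddGF m) = coeff (R := α) n (partialDistinctGF m) := by
  rw [← same_gf, coeff_mul_prod_one_sub_of_lt_order]
  rintro i -
  rw [order_X_pow]
  exact mod_cast Nat.lt_succ_of_le (le_add_right h)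

theorem partition_theorem (n : ℕ) : #(Nat.Partition.odds n) = #(Nat.Partition.distincts n) := by
  suffices (#(Nat.Partition.odds n) : ℚ) = #(Nat.Partition.distincts n) from
    mod_cast this
  rw [distinctGF_prop n (n + 1) (by linarith)]
  rw [oddGF_prop n (n + 1) (by linarith)]
  apply same_coeffs (n + 1) n n.le_succ

end

end Theorems100


/-- A colored partition of `n`, where the part `j` comes in `b j` colors, is a multiset of
pairs `(j, c)` with `j` a positive integer and `c ∈ {1, …, b j}`, whose weight (the sum of
the first coordinates, counted with multiplicity) is `n`. -/
def IsColoredPartition (b : ℕ → ℕ) (n : ℕ) (M : Multiset (ℕ × ℕ)) : Prop :=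
  (∀ p ∈ M, 0 < p.1 ∧ 1 ≤ p.2 ∧ p.2 ≤ b p.1) ∧ (M.map Prod.fst).sum = n

/-- A colored partition in which every part has odd first coordinate. -/
def IsColoredOddPartition (b : ℕ → ℕ) (n : ℕ) (M : Multiset (ℕ × ℕ)) : Prop :=
  IsColoredPartition b n M ∧ ∀ p ∈ M, Odd p.1

/-- A colored partition in which every colored part occurs at most once. -/
def IsColoredDistinctPartition (b : ℕ → ℕ) (n : ℕ) (M : Multiset (ℕ × ℕ)) : Prop :=
  IsColoredPartition b n M ∧ M.Nodup

/-- `h° n`: the number of `b`-colored partitions of `n` with all parts odd. -/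
noncomputable def coloredhOdd (b : ℕ → ℕ) (n : ℕ) : ℕ :=
  Nat.card {M // IsColoredOddPartition b n M}

/-- `h^d n`: the number of `b`-colored partitions of `n` with all colored parts distinct. -/
noncomputable def coloredhDist (b : ℕ → ℕ) (n : ℕ) : ℕ :=
  Nat.card {M // IsColoredDistinctPartition b n M}


namespace ColoredEuler

open Multiset Finset

variable {b n : ℕ}

/-- Glue colored multisets from a tuple of uncolored multisets. -/
def phi (b : ℕ) (v : Fin b → Multiset ℕ) : Multiset (ℕ × ℕ) :=
  ∑ i : Fin b, (v i).map (fun j => (j, (i : ℕ) + 1))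

/-- Split a colored multiset into its color classes. -/
def psi (b : ℕ) (M : Multiset (ℕ × ℕ)) : Fin b → Multiset ℕ :=
  fun i => (M.filter (fun p => p.2 = (i : ℕ) + 1)).map Prod.fst

lemma filter_finsetSum {α ι : Type*} (p : α → Prop) [DecidablePred p]
    (s : Finset ι) (f : ι → Multiset α) :
    Multiset.filter p (∑ i ∈ s, f i) = ∑ i ∈ s, Multiset.filter p (f i) := by
  induction s using Finset.cons_induction <;> simp [Multiset.filter_add, *]

lemma map_finsetSum {α β ι : Type*} (g : α → β) (s : Finset ι) (f : ι → Multiset α) :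
    Multiset.map g (∑ i ∈ s, f i) = ∑ i ∈ s, Multiset.map g (f i) := by
  induction s using Finset.cons_induction <;> simp [*]

lemma sum_finsetSum {ι : Type*} (s : Finset ι) (f : ι → Multiset ℕ) :
    (∑ i ∈ s, f i).sum = ∑ i ∈ s, (f i).sum := by
  induction s using Finset.cons_induction <;> simp [*]

lemma sum_ite_color {β : Type*} [AddCommMonoid β] {b : ℕ} (c : ℕ) (f : Fin b → β) :
    (∑ i : Fin b, if c = (i : ℕ) + 1 then f i else 0) =
      if h : 1 ≤ c ∧ c ≤ b then f ⟨c - 1, by omega⟩ else 0 := by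
  split
  · next h =>
    have key : ∀ i : Fin b, (c = (i : ℕ) + 1) ↔ i = ⟨c - 1, by omega⟩ := by
      intro i
      constructor
      · intro h'; exact Fin.ext (by show (i : ℕ) = c - 1; omega)
      · rintro rfl; show c = c - 1 + 1; omega
    simp_rw [key]
    simp
  · next h =>
    refine Finset.sum_eq_zero fun i _ => ?_
    rw [if_neg]
    have := i.isLt
    omega

lemma psi_phi (v : Fin b → Multiset ℕ) : psi b (phi b v) = v := by
  funext i
  rw [psi, phi, filter_finsetSum]
  have key : ∀ k : Fin b,
      Multiset.filter (fun p => p.2 = (i : ℕ) + 1) ((v k).map (fun j => (j, (k : ℕ) + 1)))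
        = if k = i then (v i).map (fun j => (j, (i : ℕ) + 1)) else 0 := by
    intro k
    rw [Multiset.filter_map]
    split
    · next h => subst h; rw [Multiset.filter_eq_self.2 (by intro a _; rfl)]
    · next h =>
      rw [Multiset.filter_eq_nil.2, Multiset.map_zero]
      intro a _
      simp only [Function.comp]
      intro hc
      exact h (Fin.ext (by omega))
  simp_rw [key]
  rw [Finset.sum_ite_eq' Finset.univ i]
  simp [Multiset.map_map, Function.comp]

lemma mem_phi {v : Fin b → Multiset ℕ} {p : ℕ × ℕ} :
    p ∈ phi b v ↔ ∃ i : Fin b, ∃ j ∈ v i, p = (j, (i : ℕ) + 1) := by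
  simp [phi, Multiset.mem_sum, eq_comm]

lemma sum_filter_color {M : Multiset (ℕ × ℕ)} (h : ∀ p ∈ M, 1 ≤ p.2 ∧ p.2 ≤ b) :
    (∑ i : Fin b, M.filter (fun p => p.2 = (i : ℕ) + 1)) = M := by
  induction M using Multiset.induction with
  | empty => simp
  | cons a s ih =>
    have ha := h a (Multiset.mem_cons_self a s)
    simp_rw [Multiset.filter_cons]
    rw [Finset.sum_add_distrib, ih (fun p hp => h p (Multiset.mem_cons_of_mem hp)),
      sum_ite_color a.2 (fun _ => ({a} : Multiset (ℕ × ℕ))), dif_pos ha]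
    rw [← Multiset.singleton_add]

lemma phi_psi {M : Multiset (ℕ × ℕ)} (h : ∀ p ∈ M, 1 ≤ p.2 ∧ p.2 ≤ b) :
    phi b (psi b M) = M := by
  rw [phi]
  have key : ∀ i : Fin b,
      (psi b M i).map (fun j => (j, (i : ℕ) + 1)) = M.filter (fun p => p.2 = (i : ℕ) + 1) := by
    intro i
    rw [psi, Multiset.map_map]
    refine (Multiset.map_congr rfl ?_).trans (Multiset.map_id _)
    intro p hp
    have := (Multiset.mem_filter.1 hp).2
    simp only [Function.comp]
    exact Prod.ext rfl this.symm
  simp_rw [key]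
  exact sum_filter_color h

lemma sum_phi (v : Fin b → Multiset ℕ) :
    ((phi b v).map Prod.fst).sum = ∑ i : Fin b, (v i).sum := by
  rw [phi, map_finsetSum, sum_finsetSum]
  refine Finset.sum_congr rfl fun i _ => ?_
  rw [Multiset.map_map]
  simp [Function.comp]

lemma count_phi (v : Fin b → Multiset ℕ) (p : ℕ × ℕ) :
    (phi b v).count p =
      if h : 1 ≤ p.2 ∧ p.2 ≤ b then (v ⟨p.2 - 1, by omega⟩).count p.1 else 0 := by
  rw [phi, Multiset.count_sum']
  have key : ∀ i : Fin b,
      ((v i).map (fun j => (j, (i : ℕ) + 1))).count p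
        = if p.2 = (i : ℕ) + 1 then (v i).count p.1 else 0 := by
    intro i
    split
    · next h =>
      have hp : p = (fun j => (j, (i : ℕ) + 1)) p.1 := Prod.ext rfl h
      rw [hp]
      exact Multiset.count_map_eq_count' _ _ (fun x y hxy => (Prod.mk.injEq _ _ _ _ ▸ hxy).1) _
    · next h =>
      rw [Multiset.count_eq_zero]
      intro hmem
      obtain ⟨j, _, rfl⟩ := Multiset.mem_map.1 hmem
      exact h rfl
  simp_rw [key]
  exact sum_ite_color p.2 _

lemma nodup_phi {v : Fin b → Multiset ℕ} :
    (phi b v).Nodup ↔ ∀ i, (v i).Nodup := by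
  simp only [Multiset.nodup_iff_count_le_one]
  constructor
  · intro h i j
    have := h (j, (i : ℕ) + 1)
    rw [count_phi] at this
    have hc : 1 ≤ (i : ℕ) + 1 ∧ (i : ℕ) + 1 ≤ b := ⟨by omega, i.isLt⟩
    rw [dif_pos hc] at this
    have hi : (⟨(i : ℕ) + 1 - 1, by omega⟩ : Fin b) = i := Fin.ext rfl
    rwa [hi] at this
  · intro h p
    rw [count_phi]
    split
    · exact h _ _
    · omega

/-- Tuples of multisets with componentwise property `R` and total sum `n`. -/
def Repr (b : ℕ) (R : Multiset ℕ → Prop) (n : ℕ) : Type :=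
  {v : Fin b → Multiset ℕ // (∀ i, R (v i)) ∧ ∑ i : Fin b, (v i).sum = n}

def ROdd (s : Multiset ℕ) : Prop := ∀ j ∈ s, 0 < j ∧ Odd j

def RDist (s : Multiset ℕ) : Prop := (∀ j ∈ s, 0 < j) ∧ s.Nodup

lemma mem_psi {M : Multiset (ℕ × ℕ)} {i : Fin b} {j : ℕ} :
    j ∈ psi b M i ↔ (j, (i : ℕ) + 1) ∈ M := by
  constructor
  · intro hj
    obtain ⟨p, hp, rfl⟩ := Multiset.mem_map.1 hj
    have := Multiset.mem_filter.1 hp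
    have h2 := this.2
    have : p = (p.1, (i : ℕ) + 1) := Prod.ext rfl h2
    rw [← this]; exact (Multiset.mem_filter.1 hp).1
  · intro hj
    exact Multiset.mem_map.2 ⟨(j, (i : ℕ) + 1), Multiset.mem_filter.2 ⟨hj, rfl⟩, rfl⟩

def equivOdd (b n : ℕ) :
    {M // IsColoredOddPartition (fun _ => b) n M} ≃ Repr b ROdd n where
  toFun := fun ⟨M, hM⟩ => ⟨psi b M, by
    have hcol : ∀ p ∈ M, 1 ≤ p.2 ∧ p.2 ≤ b := fun p hp => (hM.1.1 p hp).2
    constructor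
    · intro i j hj
      have hm := mem_psi.1 hj
      exact ⟨(hM.1.1 _ hm).1, hM.2 _ hm⟩
    · have := sum_phi (psi b M)
      rw [phi_psi hcol] at this
      rw [← this, hM.1.2]⟩
  invFun := fun ⟨v, hv⟩ => ⟨phi b v, by
    refine ⟨⟨fun p hp => ?_, ?_⟩, fun p hp => ?_⟩
    · obtain ⟨i, j, hj, rfl⟩ := mem_phi.1 hp
      exact ⟨(hv.1 i j hj).1, by omega, by simpa using Nat.succ_le_of_lt i.isLt⟩
    · rw [sum_phi]; exact hv.2
    · obtain ⟨i, j, hj, rfl⟩ := mem_phi.1 hp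
      exact (hv.1 i j hj).2⟩
  left_inv := fun ⟨M, hM⟩ => Subtype.ext (phi_psi fun p hp => (hM.1.1 p hp).2)
  right_inv := fun ⟨v, hv⟩ => Subtype.ext (psi_phi v)

def equivDist (b n : ℕ) :
    {M // IsColoredDistinctPartition (fun _ => b) n M} ≃ Repr b RDist n where
  toFun := fun ⟨M, hM⟩ => ⟨psi b M, by
    have hcol : ∀ p ∈ M, 1 ≤ p.2 ∧ p.2 ≤ b := fun p hp => (hM.1.1 p hp).2
    have hphipsi := phi_psi hcol
    refine ⟨fun i => ⟨fun j hj => (hM.1.1 _ (mem_psi.1 hj)).1, ?_⟩, ?_⟩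
    · exact nodup_phi.1 (by rw [hphipsi]; exact hM.2) i
    · have := sum_phi (psi b M)
      rw [hphipsi] at this
      rw [← this, hM.1.2]⟩
  invFun := fun ⟨v, hv⟩ => ⟨phi b v, by
    refine ⟨⟨fun p hp => ?_, ?_⟩, ?_⟩
    · obtain ⟨i, j, hj, rfl⟩ := mem_phi.1 hp
      exact ⟨(hv.1 i).1 j hj, by omega, by simpa using Nat.succ_le_of_lt i.isLt⟩
    · rw [sum_phi]; exact hv.2
    · exact nodup_phi.2 fun i => (hv.1 i).2⟩
  left_inv := fun ⟨M, hM⟩ => Subtype.ext (phi_psi fun p hp => (hM.1.1 p hp).2)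
  right_inv := fun ⟨v, hv⟩ => Subtype.ext (psi_phi v)

/-- Project a tuple to its componentwise sums. -/
def proj (b : ℕ) (R : Multiset ℕ → Prop) (n : ℕ) (v : Repr b R n) :
    {k : Fin b → ℕ // ∑ i : Fin b, k i = n} :=
  ⟨fun i => (v.1 i).sum, v.2.2⟩

def fiberEq (b : ℕ) (R : Multiset ℕ → Prop) (n : ℕ)
    (k : {k : Fin b → ℕ // ∑ i : Fin b, k i = n}) :
    {v : Repr b R n // proj b R n v = k} ≃ ∀ i : Fin b, {s : Multiset ℕ // R s ∧ s.sum = k.1 i}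
    where
  toFun := fun vp i => ⟨vp.1.1 i, vp.1.2.1 i, congrArg (fun q => q.1 i) vp.2⟩
  invFun := fun f => ⟨⟨fun i => (f i).1, fun i => (f i).2.1, by
      rw [Finset.sum_congr rfl fun i _ => (f i).2.2]; exact k.2⟩,
    Subtype.ext (funext fun i => (f i).2.2)⟩
  left_inv := fun vp => Subtype.ext (Subtype.ext rfl)
  right_inv := fun f => funext fun i => Subtype.ext rfl

noncomputable def sigmaEquiv (b : ℕ) (R : Multiset ℕ → Prop) (n : ℕ) :
    Repr b R n ≃ Σ k : {k : Fin b → ℕ // ∑ i : Fin b, k i = n},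
      ∀ i : Fin b, {s : Multiset ℕ // R s ∧ s.sum = k.1 i} :=
  (Equiv.sigmaFiberEquiv (proj b R n)).symm.trans
    (Equiv.sigmaCongrRight fun k => fiberEq b R n k)

def oddFiberEquiv (m : ℕ) :
    {s : Multiset ℕ // ROdd s ∧ s.sum = m} ≃ {p : m.Partition // p ∈ Nat.Partition.odds m} where
  toFun := fun ⟨s, h, hs⟩ => ⟨⟨s, fun {i} hi => (h i hi).1, hs⟩, by
    simp only [Nat.Partition.odds, Nat.Partition.restricted, Finset.mem_filter, Finset.mem_univ, true_and]
    intro i hi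
    exact (Nat.not_even_iff_odd).2 (h i hi).2⟩
  invFun := fun ⟨p, hp⟩ => ⟨p.parts, fun j hj =>
    ⟨p.parts_pos hj, (Nat.not_even_iff_odd).1 (by
      have := Finset.mem_filter.1 hp
      exact this.2 j hj)⟩, p.parts_sum⟩
  left_inv := fun ⟨s, h, hs⟩ => rfl
  right_inv := fun ⟨p, hp⟩ => rfl

def distFiberEquiv (m : ℕ) :
    {s : Multiset ℕ // RDist s ∧ s.sum = m} ≃
      {p : m.Partition // p ∈ Nat.Partition.distincts m} where
  toFun := fun ⟨s, h, hs⟩ => ⟨⟨s, fun {i} hi => h.1 i hi, hs⟩, by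
    simp only [Nat.Partition.distincts, Finset.mem_filter, Finset.mem_univ, true_and]
    exact h.2⟩
  invFun := fun ⟨p, hp⟩ => ⟨p.parts, ⟨fun j hj => p.parts_pos hj,
    (Finset.mem_filter.1 hp).2⟩, p.parts_sum⟩
  left_inv := fun ⟨s, h, hs⟩ => rfl
  right_inv := fun ⟨p, hp⟩ => rfl

noncomputable def fiberEquiv (m : ℕ) :
    {s : Multiset ℕ // ROdd s ∧ s.sum = m} ≃ {s : Multiset ℕ // RDist s ∧ s.sum = m} :=
  (oddFiberEquiv m).trans ((Fintype.equivOfCardEq (by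
    rw [Fintype.card_coe, Fintype.card_coe]
    exact Theorems100.partition_theorem m)).trans (distFiberEquiv m).symm)

end ColoredEuler

/-- `b`-colored ODD = DISTINCT theorem of Euler. -/
theorem coloredhOdd_eq_coloredhDist (b : ℕ) (hb : 0 < b) (n : ℕ) :
    coloredhOdd (fun _ => b) n = coloredhDist (fun _ => b) n := by
  classical
  refine Nat.card_congr ?_
  exact (ColoredEuler.equivOdd b n).trans
    ((ColoredEuler.sigmaEquiv b ColoredEuler.ROdd n).trans
      ((Equiv.sigmaCongrRight
          fun k : {k : Fin b → ℕ // ∑ i : Fin b, k i = n} =>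
            Equiv.piCongrRight fun i => ColoredEuler.fiberEquiv (k.1 i)).trans
        (((ColoredEuler.sigmaEquiv b ColoredEuler.RDist n).symm).trans
          (ColoredEuler.equivDist b n).symm)))
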